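/- Let A ∈ SL(2,ℤ) with |trace(A)| > 2 and let B₁ = [[1, 0], [0, −1]] and B₂ = A⁻¹B₁A. Then the set of matrices M ∈ GL(2,ℤ) that commute with both B₁ and B₂ is exactly {I, −I}, where I is the 2×2 identity matrix. -/
import Mathlib


/-- For Anosov `A ∈ SL(2,ℤ)`, with `B₁ = [[1, 0], [0, −1]]` and `B₂ = A⁻¹B₁A`, the only
matrices in `GL(2,ℤ)` commuting with both `B₁` and `B₂` are `±I`. -/
theorem centralizer_B1_B2 (A : Matrix.SpecialLinearGroup (Fin 2) ℤ)
    (hA : 2 < |Matrix.trace (A : Matrix (Fin 2) (Fin 2) ℤ)|)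
    (M : Matrix (Fin 2) (Fin 2) ℤ) (hM : IsUnit M.det) :
    (M * !![1, 0; 0, -1] = !![1, 0; 0, -1] * M ∧
      M * ((↑(A⁻¹) : Matrix (Fin 2) (Fin 2) ℤ) * !![1, 0; 0, -1] * (↑A : Matrix (Fin 2) (Fin 2) ℤ)) =
        ((↑(A⁻¹) : Matrix (Fin 2) (Fin 2) ℤ) * !![1, 0; 0, -1] * (↑A : Matrix (Fin 2) (Fin 2) ℤ)) * M) ↔
      M = 1 ∨ M = -1 := by
  constructor
  · rintro ⟨h1, h2⟩
    have hAinv : (↑(A⁻¹) : Matrix (Fin 2) (Fin 2) ℤ) =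
        !![A.1 1 1, -A.1 0 1; -A.1 1 0, A.1 0 0] := by
      rw [Matrix.SpecialLinearGroup.coe_inv, Matrix.adjugate_fin_two]
    have hAeta : (↑A : Matrix (Fin 2) (Fin 2) ℤ) = !![A.1 0 0, A.1 0 1; A.1 1 0, A.1 1 1] :=
      Matrix.eta_fin_two _
    have hAdet : A.1 0 0 * A.1 1 1 - A.1 0 1 * A.1 1 0 = 1 := by
      have := A.2
      rwa [Matrix.det_fin_two] at this
    rw [Matrix.trace_fin_two, lt_abs] at hA
    rw [← Matrix.ext_iff] at h1 h2
    rw [hAinv, hAeta] at h2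
    simp [Fin.forall_fin_two, Matrix.mul_apply, Fin.sum_univ_two] at h1 h2
    set p := A.1 0 0
    set q := A.1 0 1
    set r := A.1 1 0
    set s := A.1 1 1
    set a := M 0 0 with ha'
    set b := M 0 1 with hb'
    set c := M 1 0 with hc'
    set d := M 1 1 with hd'
    have hb : b = 0 := by omega
    have hc : c = 0 := by omega
    rw [Matrix.det_fin_two, ← ha', ← hb', ← hc', ← hd', hb, hc, Int.isUnit_iff] at hM
    simp only [hb, hc] at h2
    obtain ⟨⟨_, e2⟩, e3, _⟩ := h2
    have h4 : (2 : ℤ) * (q * s * (a - d)) = 0 := by linear_combination e2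
    have h5 : (2 : ℤ) * (p * r * (a - d)) = 0 := by linear_combination e3
    have had : a = d ∨ (q * s = 0 ∧ p * r = 0) := by
      rcases mul_eq_zero.mp h4 with h | h
      · omega
      rcases mul_eq_zero.mp h5 with h' | h'
      · omega
      rcases mul_eq_zero.mp h with hqs | hzero
      · rcases mul_eq_zero.mp h' with hpr | hzero'
        · exact Or.inr ⟨hqs, hpr⟩
        · exact Or.inl (by omega)
      · exact Or.inl (by omega)
    rcases had with had | ⟨hqs, hpr⟩
    · have hdd : d = 1 ∨ d = -1 := by
        rcases hM with h | h
        · rw [had] at h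
          rcases Int.eq_one_or_neg_one_of_mul_eq_one' (by linarith : d * d = 1) with ⟨h', _⟩ | ⟨h', _⟩
          · exact Or.inl h'
          · exact Or.inr h'
        · rw [had] at h
          nlinarith
      rcases hdd with h | h
      · left
        rw [Matrix.eta_fin_two M, ← ha', ← hb', ← hc', ← hd', hb, hc, had, h, Matrix.one_fin_two]
      · right
        rw [Matrix.eta_fin_two M, ← ha', ← hb', ← hc', ← hd', hb, hc, had, h]
        rw [Matrix.one_fin_two]
        ext i j
        fin_cases i <;> fin_cases j <;> simp
    · exfalso
      rcases mul_eq_zero.mp hqs with h | h <;> rcases mul_eq_zero.mp hpr with h' | h'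
      · rw [h, h'] at hAdet; omega
      · rw [h, h'] at hAdet
        rcases Int.eq_one_or_neg_one_of_mul_eq_one' (by linarith : p * s = 1) with ⟨hp1, hs1⟩ | ⟨hp1, hs1⟩ <;>
          omega
      · rw [h, h'] at hA hAdet; omega
      · rw [h, h'] at hAdet; omega
  · rintro (rfl | rfl)
    constructor
    · rw [one_mul, mul_one]
    · rw [one_mul, mul_one]
    constructor
    · rw [neg_one_mul, mul_neg_one]
    · rw [neg_one_mul, mul_neg_one]
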